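/- Let R be an affine domain over a field k with trdeg_k R = 1 and let φ be a nontrivial exponential map on R. If k̃ denotes the algebraic closure of k in R, then R is a polynomial ring in one variable over k̃ and R^φ = k̃. -/

import Mathlib

open Polynomial

/-- An exponential map on a `k`-algebra `R`: a `k`-algebra homomorphism `φ : R → R[W]`
with `ε₀ ∘ φ = id` and the coassociativity condition `φ_T φ_W = φ_{W+T}`. -/
def IsExponentialMap {k R : Type*} [CommRing k] [CommRing R] [Algebra k R]
    (φ : R →ₐ[k] Polynomial R) : Prop :=
  (∀ a : R, (φ a).eval 0 = a) ∧
  (∀ a : R, (φ a).map φ.toRingHom =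
      (φ a).eval₂ (C.comp C) (Polynomial.X + Polynomial.C Polynomial.X))

namespace Stmt19Aux

set_option linter.unusedSectionVars false
set_option maxHeartbeats 1000000

theorem not_dvd_choose_pow {p : ℕ} (hp : p.Prime) :
    ∀ e m : ℕ, p ^ e ∣ m → ¬ p ∣ m / p ^ e → ¬ p ∣ m.choose (p ^ e) := by
  haveI : Fact p.Prime := ⟨hp⟩
  intro e
  induction e with
  | zero => intro m _ h; simpa using h
  | succ e ih =>
    intro m hdvd hnd
    have hpm : p ∣ m := dvd_trans (dvd_pow_self p (Nat.succ_ne_zero e)) hdvd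
    have hmod : m.choose (p ^ (e + 1)) ≡
        (m % p).choose (p ^ (e+1) % p) * (m / p).choose (p ^ (e+1) / p) [MOD p] :=
      Choose.choose_modEq_choose_mod_mul_choose_div_nat
    have h1 : m % p = 0 := Nat.eq_zero_of_dvd_of_lt hpm |> fun _ => Nat.mod_eq_zero_of_dvd hpm
    have h2 : p ^ (e+1) % p = 0 := Nat.mod_eq_zero_of_dvd (dvd_pow_self p (Nat.succ_ne_zero e))
    have h3 : p ^ (e+1) / p = p ^ e := by
      rw [pow_succ, Nat.mul_div_cancel _ hp.pos]
    rw [h1, h2, h3, Nat.choose_zero_right, one_mul] at hmod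
    have hiff : p ∣ m.choose (p ^ (e+1)) ↔ p ∣ (m / p).choose (p ^ e) := by
      constructor <;> intro h
      · exact (Nat.modEq_zero_iff_dvd.mp ((hmod.symm.trans (Nat.modEq_zero_iff_dvd.mpr h))))
      · exact (Nat.modEq_zero_iff_dvd.mp ((hmod.trans (Nat.modEq_zero_iff_dvd.mpr h))))
    rw [hiff]
    apply ih
    · have := pow_succ p e ▸ hdvd
      exact (Nat.dvd_div_iff_mul_dvd hpm).mpr (by rwa [mul_comm (p^e) p] at this)
    · rwa [Nat.div_div_eq_div_mul, mul_comm, ← pow_succ]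

variable {k R : Type*} [Field k] [CommRing R] [IsDomain R] [Algebra k R]
variable {φ : R →ₐ[k] Polynomial R}

theorem coeff0 (hφ : IsExponentialMap φ) (a : R) : (φ a).coeff 0 = a := by
  rw [coeff_zero_eq_eval_zero]; exact hφ.1 a

theorem phi_inj (hφ : IsExponentialMap φ) : Function.Injective φ := by
  intro a b h
  rw [← coeff0 hφ a, ← coeff0 hφ b, h]

theorem phi_ne_zero (hφ : IsExponentialMap φ) {a : R} (ha : a ≠ 0) : φ a ≠ 0 := by
  intro h
  exact ha (phi_inj hφ (by rw [h, map_zero]))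

theorem eq_C_of_natDegree_zero (hφ : IsExponentialMap φ) {a : R} (h : (φ a).natDegree = 0) :
    φ a = C a := by
  rw [eq_C_of_natDegree_eq_zero h, coeff0 hφ]

theorem pow_coeff_coeff (j i t : ℕ) :
    ((((X : Polynomial (Polynomial R)) + Polynomial.C Polynomial.X) ^ j).coeff i).coeff t
      = if i + t = j then (j.choose i : R) else 0 := by
  rw [add_pow, finset_sum_coeff]
  have hterm : ∀ l, ((X : Polynomial (Polynomial R)) ^ l * Polynomial.C Polynomial.X ^ (j - l) *
      (j.choose l : Polynomial (Polynomial R))).coeff i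
      = if l = i then (X : Polynomial R) ^ (j - l) * (j.choose l : Polynomial R) else 0 := by
    intro l
    rw [← C_pow, ← Polynomial.C_eq_natCast, mul_assoc, ← map_mul,
      mul_comm ((X:Polynomial (Polynomial R))^l), coeff_C_mul, coeff_X_pow]
    split_ifs <;> simp_all [mul_comm]
  simp only [hterm]
  rw [Finset.sum_ite_eq' (Finset.range (j+1)) i]
  by_cases hij : i ∈ Finset.range (j + 1)
  · rw [if_pos hij]
    have hile : i ≤ j := Nat.lt_succ_iff.mp (Finset.mem_range.mp hij)
    rw [← Polynomial.C_eq_natCast, mul_comm, coeff_C_mul, coeff_X_pow]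
    by_cases h : i + t = j
    · rw [if_pos h, if_pos (by omega)]; ring
    · rw [if_neg (by omega), if_neg h]; ring
  · rw [if_neg hij]
    have : ¬ (i + t = j) := by
      intro h; exact hij (Finset.mem_range.mpr (by omega))
    rw [if_neg this, coeff_zero]

theorem coeff_phi_coeff (hφ : IsExponentialMap φ) (a : R) (i t : ℕ) :
    (φ ((φ a).coeff i)).coeff t = ((i + t).choose i : R) * (φ a).coeff (i + t) := by
  have h2 : φ ((φ a).coeff i) = ((φ a).eval₂ (C.comp C) (X + Polynomial.C X)).coeff i := by
    rw [← hφ.2 a, coeff_map]; rfl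
  rw [h2, eval₂_eq_sum_range, finset_sum_coeff, finset_sum_coeff]
  have hterm : ∀ j, ((RingHom.comp C C ((φ a).coeff j) *
        ((X : Polynomial (Polynomial R)) + Polynomial.C Polynomial.X) ^ j).coeff i).coeff t
      = if i + t = j then ((j.choose i : R) * (φ a).coeff j) else 0 := by
    intro j
    rw [RingHom.comp_apply, coeff_C_mul, coeff_C_mul, pow_coeff_coeff]
    split_ifs <;> ring
  simp only [hterm]
  rw [Finset.sum_ite_eq (Finset.range ((φ a).natDegree + 1)) (i + t)]
  by_cases h : i + t ∈ Finset.range ((φ a).natDegree + 1)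
  · rw [if_pos h]
  · rw [if_neg h]
    have : (φ a).coeff (i + t) = 0 :=
      coeff_eq_zero_of_natDegree_lt (by simpa using Nat.lt_of_succ_le (not_lt.mp (by
        simpa [Finset.mem_range] using h)))
    rw [this, mul_zero]

/-- The leading coefficient of `φ a` is invariant. -/
theorem leadingCoeff_invariant (hφ : IsExponentialMap φ) (a : R) :
    φ ((φ a).leadingCoeff) = C ((φ a).leadingCoeff) := by
  have h : (φ ((φ a).coeff (φ a).natDegree)).natDegree = 0 := by
    refine Nat.le_zero.mp (natDegree_le_iff_coeff_eq_zero.mpr fun t ht => ?_)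
    rw [coeff_phi_coeff hφ]
    rw [coeff_eq_zero_of_natDegree_lt (by omega), mul_zero]
  rw [Polynomial.leadingCoeff, eq_C_of_natDegree_eq_zero h, coeff0 hφ]

/-- invariant coefficients + positive degree argument implies nonvanishing. -/
theorem eval_invariant_ne_zero (hφ : IsExponentialMap φ) {b : R} (hb : (φ b).natDegree ≠ 0)
    {Q : Polynomial R} (hQ : Q ≠ 0) (hc : ∀ i, φ (Q.coeff i) = C (Q.coeff i)) :
    Q.eval b ≠ 0 := by
  intro h0
  have key : φ (Q.eval b) = Q.comp (φ b) := by
    show _ = eval₂ C (φ b) Q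
    rw [eval_eq_sum_range, eval₂_eq_sum_range, map_sum]
    refine Finset.sum_congr rfl fun i _ => ?_
    rw [map_mul, map_pow, hc i]
  rw [h0, map_zero] at key
  rcases (comp_eq_zero_iff).mp key.symm with h | h
  · exact hQ h
  · exact hb (by rw [h.2, natDegree_C])

variable (φ) in
/-- The subalgebra of invariants. -/
def invariants : Subalgebra k R where
  carrier := {x | φ x = C x}
  mul_mem' {x y} hx hy := by
    have hx' : φ x = C x := hx
    have hy' : φ y = C y := hy
    show φ (x * y) = C (x * y)
    rw [map_mul, hx', hy', ← map_mul]
  add_mem' {x y} hx hy := by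
    have hx' : φ x = C x := hx
    have hy' : φ y = C y := hy
    show φ (x + y) = C (x + y)
    rw [map_add, hx', hy', ← map_add]
  algebraMap_mem' r := by
    show φ (algebraMap k R r) = C (algebraMap k R r)
    rw [AlgHom.commutes, Polynomial.algebraMap_apply]

theorem mem_invariants {x : R} : x ∈ invariants φ ↔ φ x = C x := Iff.rfl

/-- Part 1, direction ←. -/
theorem invariant_of_integral (hφ : IsExponentialMap φ) {a : R} (ha : a ∈ integralClosure k R) :
    φ a = C a := by
  have hint : IsIntegral k a := ha
  have hq0 : minpoly k a ≠ 0 := minpoly.ne_zero hint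
  have root : Polynomial.aeval (φ a) (minpoly k a) = 0 := by
    rw [Polynomial.aeval_algHom_apply, minpoly.aeval, map_zero]
  have : ((minpoly k a).map (algebraMap k R)).comp (φ a) = 0 := by
    show eval₂ C (φ a) _ = 0
    rw [eval₂_map]
    exact root
  rcases comp_eq_zero_iff.mp this with h | h
  · exact absurd (Polynomial.map_injective _ (algebraMap k R).injective (by simpa using h)) hq0
  · rw [h.2, coeff0 hφ]

/-- Part 1, direction →. -/
theorem integral_of_invariant (hφ : IsExponentialMap φ)
    (htr2 : ∀ f : Fin 2 → R, ¬ AlgebraicIndependent k f)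
    (hnt : ∃ a : R, φ a ≠ Polynomial.C a) {a : R} (ha : φ a = C a) :
    a ∈ integralClosure k R := by
  by_contra hnint
  have htr : Transcendental k a := fun halg => hnint (halg.isIntegral)
  obtain ⟨b, hb⟩ := hnt
  have hbdeg : (φ b).natDegree ≠ 0 := fun h => hb (eq_C_of_natDegree_zero hφ h)
  have hone : AlgebraicIndependent k (fun _ : Unit => a) := by
    rw [algebraicIndependent_unique_type_iff]; exact htr
  have hnotpair : ¬ AlgebraicIndependent k (fun o : Option Unit => o.elim b fun _ => a) := by
    intro hpair
    have einj : Function.Injective (![Option.none, Option.some ()] : Fin 2 → Option Unit) := by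
      decide
    exact htr2 _ (hpair.comp _ einj)
  have halg : IsAlgebraic (Algebra.adjoin k (Set.range fun _ : Unit => a)) b := by
    by_contra htrb
    exact hnotpair ((hone.option_iff_transcendental b).mpr htrb)
  set T := Algebra.adjoin k (Set.range fun _ : Unit => a) with hT
  obtain ⟨P, hP0, hPb⟩ := halg
  have hTinv : T ≤ invariants φ := by
    rw [Algebra.adjoin_le_iff]
    rintro x ⟨u, rfl⟩
    exact ha
  have hmapinj : Function.Injective (Polynomial.map (algebraMap T R)) :=
    Polynomial.map_injective _ Subtype.val_injective
  have hQ0 : P.map (algebraMap T R) ≠ 0 := fun h =>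
    hP0 (hmapinj (by rw [h, Polynomial.map_zero]))
  have heval : (P.map (algebraMap T R)).eval b = 0 := by
    rw [eval_map]; exact hPb
  refine eval_invariant_ne_zero hφ hbdeg hQ0 (fun i => ?_) heval
  rw [coeff_map]
  exact hTinv (P.coeff i).2

theorem exists_deg (hφ : IsExponentialMap φ) {a : R} {j : ℕ} (hj : j ≤ (φ a).natDegree)
    (hch : (((φ a).natDegree.choose j : ℕ) : R) ≠ 0) :
    ∃ b : R, (φ b).natDegree = j := by
  rcases Nat.eq_zero_or_pos j with rfl | hj0
  · exact ⟨0, by simp⟩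
  set m := (φ a).natDegree with hm
  refine ⟨(φ a).coeff (m - j), ?_⟩
  have ha0 : a ≠ 0 := by
    rintro rfl
    rw [map_zero, natDegree_zero] at hm
    omega
  have hcm : (φ a).coeff m ≠ 0 := by
    rw [hm]
    exact leadingCoeff_ne_zero.mpr (phi_ne_zero hφ ha0)
  have hcoeffj : (φ ((φ a).coeff (m - j))).coeff j ≠ 0 := by
    rw [coeff_phi_coeff hφ, Nat.sub_add_cancel hj, Nat.choose_symm hj]
    exact mul_ne_zero hch hcm
  refine le_antisymm ?_ (le_natDegree_of_ne_zero hcoeffj)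
  refine natDegree_le_iff_coeff_eq_zero.mpr fun t ht => ?_
  rw [coeff_phi_coeff hφ]
  rw [coeff_eq_zero_of_natDegree_lt (by omega), mul_zero]

theorem exists_min_deg (hφ : IsExponentialMap φ) (hnt : ∃ a : R, φ a ≠ Polynomial.C a) :
    ∃ g : R, 0 < (φ g).natDegree ∧ ∀ a : R, (φ g).natDegree ∣ (φ a).natDegree := by
  classical
  set S : Set ℕ := {m | 0 < m ∧ ∃ a : R, (φ a).natDegree = m} with hS
  have hSne : S.Nonempty := by
    obtain ⟨b, hb⟩ := hnt
    refine ⟨(φ b).natDegree, ?_, b, rfl⟩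
    rcases Nat.eq_zero_or_pos (φ b).natDegree with h | h
    · exact absurd (eq_C_of_natDegree_zero hφ h) hb
    · exact h
  set n := sInf S with hn
  have hnS : n ∈ S := Nat.sInf_mem hSne
  have hmin : ∀ m ∈ S, n ≤ m := fun m hm => Nat.sInf_le hm
  obtain ⟨hnpos, g, hg⟩ := hnS
  refine ⟨g, hg ▸ hnpos, fun a => ?_⟩
  rw [hg]
  rcases Nat.eq_zero_or_pos (φ a).natDegree with h0 | hmpos
  · rw [h0]; exact dvd_zero n
  obtain ⟨p, hcp⟩ := CharP.exists k
  rcases CharP.char_is_prime_or_zero k p with hp | hp0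
  · haveI : CharP R p := charP_of_injective_algebraMap (algebraMap k R).injective p
    have hclaim : ∀ m ∈ S, (p ^ m.factorization p) ∈ S := by
      rintro m ⟨hm0, c, hc⟩
      have hm0' : m ≠ 0 := by omega
      have hch : ¬ p ∣ m.choose (p ^ m.factorization p) :=
        not_dvd_choose_pow hp _ m (Nat.ordProj_dvd m p) (Nat.not_dvd_ordCompl hp hm0')
      have hchR : ((m.choose (p ^ m.factorization p) : ℕ) : R) ≠ 0 := by
        rw [Ne, CharP.cast_eq_zero_iff R p]
        exact hch
      obtain ⟨b, hb⟩ := exists_deg hφ (a := c) (j := p ^ m.factorization p)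
        (by rw [hc]; exact Nat.ordProj_le p hm0') (by rw [hc]; exact hchR)
      exact ⟨Nat.pow_pos hp.pos, b, hb⟩
    have hn_pow : n = p ^ n.factorization p := by
      have h1 := hclaim n ⟨hnpos, g, hg⟩
      have h2 := hmin _ h1
      have h3 := Nat.ordProj_le p (by omega : n ≠ 0)
      omega
    have hm := hclaim (φ a).natDegree ⟨hmpos, a, rfl⟩
    have h4 : n ≤ p ^ (φ a).natDegree.factorization p := hmin _ hm
    have h5 : n.factorization p ≤ (φ a).natDegree.factorization p := by
      by_contra hlt
      push_neg at hlt
      have := Nat.pow_lt_pow_right hp.one_lt hlt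
      omega
    calc n = p ^ n.factorization p := hn_pow
    _ ∣ p ^ (φ a).natDegree.factorization p := pow_dvd_pow p h5
    _ ∣ (φ a).natDegree := Nat.ordProj_dvd _ p
  · subst hp0
    haveI : CharZero k := CharP.charP_to_charZero k
    haveI : CharZero R := charZero_of_injective_algebraMap (algebraMap k R).injective
    have h1 : (1 : ℕ) ∈ S := by
      obtain ⟨b, hb⟩ := exists_deg hφ (a := a) (j := 1) hmpos
        (by rw [Nat.choose_one_right]; exact Nat.cast_ne_zero.mpr (by omega))
      exact ⟨one_pos, b, hb⟩
    have := hmin _ h1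
    have : n = 1 := by omega
    rw [this]
    exact one_dvd _

theorem invariant_inv (hφ : IsExponentialMap φ)
    (htr2 : ∀ f : Fin 2 → R, ¬ AlgebraicIndependent k f)
    (hnt : ∃ a : R, φ a ≠ Polynomial.C a) {u : R} (hu : φ u = C u) (hu0 : u ≠ 0) :
    ∃ v : R, φ v = C v ∧ u * v = 1 := by
  have hint : IsIntegral k u := integral_of_invariant hφ htr2 hnt hu
  obtain ⟨w, hw⟩ := hint.isUnit hu0
  refine ⟨(↑w⁻¹ : R), ?_, by rw [← hw]; exact w.mul_inv⟩
  have h1 : φ u * φ ↑w⁻¹ = 1 := by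
    rw [← map_mul, ← hw, w.mul_inv, map_one]
  have hunit : IsUnit (φ (↑w⁻¹ : R)) := IsUnit.of_mul_eq_one _ (by rw [mul_comm] at h1; exact h1)
  exact eq_C_of_natDegree_zero hφ (natDegree_eq_zero_of_isUnit hunit)

end Stmt19Aux


open Stmt19Aux

/-- If `R` is an affine domain of transcendence degree one over `k` admitting a nontrivial
exponential map `φ`, and `k̃` is the algebraic closure of `k` in `R` (= `integralClosure k R`
since `k` is a field), then `R` is a polynomial ring in one variable over `k̃` and
`R^φ = k̃`. -/
theorem stmt19 {k R : Type*} [Field k] [CommRing R] [IsDomain R] [Algebra k R]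
    [Algebra.FiniteType k R]
    (htr1 : ∃ a : R, Transcendental k a)
    (htr2 : ∀ f : Fin 2 → R, ¬ AlgebraicIndependent k f)
    (φ : R →ₐ[k] Polynomial R) (hφ : IsExponentialMap φ)
    (hnt : ∃ a : R, φ a ≠ Polynomial.C a) :
    (∃ g : R,
      Function.Bijective fun p : Polynomial ↥(integralClosure k R) =>
        Polynomial.eval₂ (algebraMap ↥(integralClosure k R) R) g p) ∧
    (∀ a : R, φ a = Polynomial.C a ↔ a ∈ integralClosure k R) := by
  have hpart2 : ∀ a : R, φ a = Polynomial.C a ↔ a ∈ integralClosure k R := fun a =>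
    ⟨fun h => integral_of_invariant hφ htr2 hnt h, fun h => invariant_of_integral hφ h⟩
  refine ⟨?_, hpart2⟩
  obtain ⟨g, hgpos, hgdvd⟩ := exists_min_deg hφ hnt
  set n := (φ g).natDegree with hn
  refine ⟨g, ?_, ?_⟩
  · -- injectivity
    have hker : ∀ p : Polynomial ↥(integralClosure k R),
        Polynomial.eval₂ (algebraMap ↥(integralClosure k R) R) g p = 0 → p = 0 := by
      intro p hp
      by_contra hp0
      have hmapinj : Function.Injective
          (Polynomial.map (algebraMap ↥(integralClosure k R) R)) :=
        Polynomial.map_injective _ Subtype.val_injective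
      have hQ0 : p.map (algebraMap ↥(integralClosure k R) R) ≠ 0 := fun h =>
        hp0 (hmapinj (by rw [h, Polynomial.map_zero]))
      have heval : (p.map (algebraMap ↥(integralClosure k R) R)).eval g = 0 := by
        rw [Polynomial.eval_map]; exact hp
      exact eval_invariant_ne_zero hφ (by omega) hQ0 (fun i => by
        rw [Polynomial.coeff_map]
        exact invariant_of_integral hφ (p.coeff i).2) heval
    intro p q hpq
    have hpq' : Polynomial.eval₂ (algebraMap ↥(integralClosure k R) R) g p
        = Polynomial.eval₂ (algebraMap ↥(integralClosure k R) R) g q := hpq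
    have hsub : Polynomial.eval₂ (algebraMap ↥(integralClosure k R) R) g (p - q) = 0 := by
      rw [Polynomial.eval₂_sub, hpq', sub_self]
    have := hker _ hsub
    exact sub_eq_zero.mp this
  · -- surjectivity
    have hsurj : ∀ m : ℕ, ∀ a : R, (φ a).natDegree = m →
        ∃ p : Polynomial ↥(integralClosure k R),
          Polynomial.eval₂ (algebraMap ↥(integralClosure k R) R) g p = a := by
      intro m
      induction m using Nat.strong_induction_on with
      | _ m ih =>
        intro a hdeg
        rcases Nat.eq_zero_or_pos m with rfl | hm
        · have haA : a ∈ integralClosure k R := (hpart2 a).mp (eq_C_of_natDegree_zero hφ hdeg)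
          exact ⟨Polynomial.C ⟨a, haA⟩, by rw [Polynomial.eval₂_C]; rfl⟩
        · have ha0 : a ≠ 0 := by
            rintro rfl
            rw [map_zero, Polynomial.natDegree_zero] at hdeg
            omega
          have hg0 : g ≠ 0 := by
            rintro rfl
            rw [map_zero, Polynomial.natDegree_zero] at hn
            omega
          obtain ⟨q, hq⟩ : n ∣ m := hdeg ▸ hgdvd a
          have hq0 : 0 < q := by
            rcases Nat.eq_zero_or_pos q with rfl | h
            · omega
            · exact h
          set lr := (φ a).leadingCoeff with hlr
          set lg := (φ g).leadingCoeff with hlg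
          have hlr0 : lr ≠ 0 := Polynomial.leadingCoeff_ne_zero.mpr (phi_ne_zero hφ ha0)
          have hlg0 : lg ≠ 0 := Polynomial.leadingCoeff_ne_zero.mpr (phi_ne_zero hφ hg0)
          have hlginv : φ lg = Polynomial.C lg := leadingCoeff_invariant hφ g
          have hlrinv : φ lr = Polynomial.C lr := leadingCoeff_invariant hφ a
          have hlgq : φ (lg ^ q) = Polynomial.C (lg ^ q) := by
            rw [map_pow, hlginv, map_pow]
          obtain ⟨v, hvinv, hvm⟩ := invariant_inv hφ htr2 hnt hlgq (pow_ne_zero _ hlg0)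
          have hv0 : v ≠ 0 := by
            rintro rfl
            rw [mul_zero] at hvm
            exact zero_ne_one hvm
          set c := lr * v with hc
          have hcinv : φ c = Polynomial.C c := by
            rw [hc, map_mul, hlrinv, hvinv, map_mul]
          have hc0 : c ≠ 0 := mul_ne_zero hlr0 hv0
          have hphi_cgq : φ (c * g ^ q) = Polynomial.C c * (φ g) ^ q := by
            rw [map_mul, map_pow, hcinv]
          have hdeg_cgq : (φ (c * g ^ q)).natDegree = m := by
            rw [hphi_cgq, Polynomial.natDegree_mul (by
                simpa [Polynomial.C_eq_zero] using hc0)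
              (pow_ne_zero _ (phi_ne_zero hφ hg0)), Polynomial.natDegree_C,
              Polynomial.natDegree_pow, zero_add, ← hn]
            rw [hq]
            exact Nat.mul_comm q n
          have hlead_cgq : (φ (c * g ^ q)).leadingCoeff = lr := by
            rw [hphi_cgq, Polynomial.leadingCoeff_mul, Polynomial.leadingCoeff_C,
              Polynomial.leadingCoeff_pow, ← hlg, hc]
            rw [mul_assoc, mul_comm v, hvm, mul_one]
          by_cases hr0 : a - c * g ^ q = 0
          · refine ⟨Polynomial.C ⟨c, (hpart2 c).mp hcinv⟩ * Polynomial.X ^ q, ?_⟩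
            have heq : a = c * g ^ q := by linear_combination hr0
            rw [Polynomial.eval₂_mul, Polynomial.eval₂_C, Polynomial.eval₂_X_pow]
            show c * g ^ q = a
            rw [heq]
          · have hcgq0 : c * g ^ q ≠ 0 := mul_ne_zero hc0 (pow_ne_zero _ hg0)
            have hdeglt : (φ (a - c * g ^ q)).natDegree < m := by
              have hd1 : (φ a).degree = (φ (c * g ^ q)).degree := by
                rw [Polynomial.degree_eq_natDegree (phi_ne_zero hφ ha0),
                  Polynomial.degree_eq_natDegree (phi_ne_zero hφ hcgq0), hdeg, hdeg_cgq]
              have hd2 : (φ a - φ (c * g ^ q)).degree < (φ a).degree :=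
                Polynomial.degree_sub_lt hd1 (phi_ne_zero hφ ha0) (by rw [hlead_cgq])
              have hmapsub : φ (a - c * g ^ q) = φ a - φ (c * g ^ q) := map_sub φ _ _
              have := Polynomial.natDegree_lt_natDegree (phi_ne_zero hφ hr0)
                (by rw [hmapsub]; exact hd2)
              omega
            obtain ⟨p', hp'⟩ := ih _ hdeglt (a - c * g ^ q) rfl
            refine ⟨p' + Polynomial.C ⟨c, (hpart2 c).mp hcinv⟩ * Polynomial.X ^ q, ?_⟩
            rw [Polynomial.eval₂_add, hp', Polynomial.eval₂_mul, Polynomial.eval₂_C,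
              Polynomial.eval₂_X_pow]
            show a - c * g ^ q + c * g ^ q = a
            ring
    intro a
    obtain ⟨p, hp⟩ := hsurj _ a rfl
    exact ⟨p, hp⟩
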